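/- Let C be a free group and let A ≤ B ≤ C be subgroups with A a free factor of C. Then A is a free factor of B. -/

import Mathlib

open Function Set Subgroup

universe u v

/-- If a group `H` has a "basis" `b : ι → H` (in the sense of the universal property of
free groups), then for any splitting of `ι` by a predicate `p`, the subgroups generated
by the two parts of the basis give an internal free product decomposition of `H`. -/
theorem split_basis_coprod_lift_bijective {H : Type u} [Group H] {ι : Type v} (b : ι → H)
    (hb : ∀ (X : Type u) [Group X] (f : ι → X), ∃! F : H →* X, ∀ i, F (b i) = f i)
    (p : ι → Prop) :
    Function.Bijective (Monoid.Coprod.lift (Subgroup.closure (b '' {i | p i})).subtype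
      (Subgroup.closure (b '' {i | ¬ p i})).subtype) := by
  classical
  set A₁ := Subgroup.closure (b '' {i | p i}) with hA₁
  set Q := Subgroup.closure (b '' {i | ¬ p i}) with hQ
  set L₀ := Monoid.Coprod.lift A₁.subtype Q.subtype with hL₀
  have memA : ∀ i, p i → b i ∈ A₁ := fun i h => Subgroup.subset_closure ⟨i, h, rfl⟩
  have memQ : ∀ i, ¬ p i → b i ∈ Q := fun i h => Subgroup.subset_closure ⟨i, h, rfl⟩
  let f : ι → Monoid.Coprod A₁ Q := fun i =>
    if h : p i then Monoid.Coprod.inl ⟨b i, memA i h⟩ else Monoid.Coprod.inr ⟨b i, memQ i h⟩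
  obtain ⟨F, hF, -⟩ := hb (Monoid.Coprod A₁ Q) f
  have left : L₀.comp F = MonoidHom.id H := by
    obtain ⟨G₀, -, uG⟩ := hb H b
    rw [uG (L₀.comp F) (fun i => ?_), uG (MonoidHom.id H) (fun i => rfl)]
    rw [MonoidHom.comp_apply, hF]
    show L₀ (if h : p i then Monoid.Coprod.inl ⟨b i, memA i h⟩
      else Monoid.Coprod.inr ⟨b i, memQ i h⟩) = b i
    split_ifs with h
    · rw [hL₀, Monoid.Coprod.lift_apply_inl]; rfl
    · rw [hL₀, Monoid.Coprod.lift_apply_inr]; rfl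
  have hFA : ∀ x (hx : x ∈ A₁), F x = Monoid.Coprod.inl ⟨x, hx⟩ := by
    intro x hx
    induction hx using Subgroup.closure_induction with
    | mem x hx =>
      obtain ⟨i, hi, rfl⟩ := hx
      have h1 := hF i
      exact h1.trans (dif_pos hi)
    | one => rw [map_one]; exact (map_one Monoid.Coprod.inl).symm
    | mul x y hx hy ihx ihy => rw [map_mul, ihx, ihy, ← map_mul]; rfl
    | inv x hx ihx => rw [map_inv, ihx, ← map_inv]; rfl
  have hFQ : ∀ x (hx : x ∈ Q), F x = Monoid.Coprod.inr ⟨x, hx⟩ := by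
    intro x hx
    induction hx using Subgroup.closure_induction with
    | mem x hx =>
      obtain ⟨i, hi, rfl⟩ := hx
      have h1 := hF i
      exact h1.trans (dif_neg hi)
    | one => rw [map_one]; exact (map_one Monoid.Coprod.inr).symm
    | mul x y hx hy ihx ihy => rw [map_mul, ihx, ihy, ← map_mul]; rfl
    | inv x hx ihx => rw [map_inv, ihx, ← map_inv]; rfl
  have right : F.comp L₀ = MonoidHom.id _ := by
    apply Monoid.Coprod.hom_ext
    · ext a
      simp only [MonoidHom.comp_apply, MonoidHom.id_apply]
      rw [hL₀, Monoid.Coprod.lift_apply_inl]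
      exact hFA a.1 a.2
    · ext a
      simp only [MonoidHom.comp_apply, MonoidHom.id_apply]
      rw [hL₀, Monoid.Coprod.lift_apply_inr]
      exact hFQ a.1 a.2
  constructor
  · intro x y hxy
    have := congrArg F hxy
    simpa using (DFunLike.congr_fun right x).symm.trans
      ((congrArg F hxy).trans (DFunLike.congr_fun right y))
  · intro x
    exact ⟨F x, DFunLike.congr_fun left x⟩

open Function Set Subgroup



lemma FreeGroupBasis.lift_basis {ι : Type*} {G H : Type*} [Group G] [Group H]
    (b : FreeGroupBasis ι G) (f : ι → H) (i : ι) : b.lift f (b i) = f i := by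
  simp [FreeGroupBasis.lift]

lemma FreeGroupBasis.closure_range {ι : Type*} {G : Type*} [Group G]
    (b : FreeGroupBasis ι G) : Subgroup.closure (Set.range b) = ⊤ := by
  rw [eq_top_iff]
  intro x _
  have hx : x = b.repr.symm (b.repr x) := (b.repr.symm_apply_apply x).symm
  rw [hx]
  generalize (b.repr x) = y
  induction y using FreeGroup.induction_on with
  | C1 => rw [map_one]; exact one_mem _
  | of i => exact Subgroup.subset_closure ⟨i, rfl⟩
  | inv_of i h => rw [map_inv]; exact inv_mem h
  | mul y z hy hz => rw [map_mul]; exact mul_mem hy hz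

theorem adapted_unique_lift {C : Type u} [Group C] {A P : Subgroup C}
    (hbij : Function.Bijective (Monoid.Coprod.lift A.subtype P.subtype))
    {ιA ιP : Type*} (bA : FreeGroupBasis ιA A) (bP : FreeGroupBasis ιP P)
    (X : Type*) [Group X] (f : ιA ⊕ ιP → X) :
    ∃! F : C →* X, ∀ i, F (Sum.elim (fun i => (bA i : C)) (fun j => (bP j : C)) i) = f i := by
  set φ := MulEquiv.ofBijective (Monoid.Coprod.lift A.subtype P.subtype) hbij with hφ
  have hφinl : ∀ a : A, φ (Monoid.Coprod.inl a) = (a : C) := fun a => by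
    rw [hφ, MulEquiv.ofBijective_apply, Monoid.Coprod.lift_apply_inl]; rfl
  have hφinr : ∀ a : P, φ (Monoid.Coprod.inr a) = (a : C) := fun a => by
    rw [hφ, MulEquiv.ofBijective_apply, Monoid.Coprod.lift_apply_inr]; rfl
  refine ⟨(Monoid.Coprod.lift (bA.lift (f ∘ Sum.inl)) (bP.lift (f ∘ Sum.inr))).comp
      φ.symm.toMonoidHom, ?_, ?_⟩
  · rintro (i | j)
    · have : φ.symm ((bA i : A) : C) = Monoid.Coprod.inl (bA i) := by
        rw [MulEquiv.symm_apply_eq, hφinl]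

      simp only [Sum.elim_inl, MonoidHom.comp_apply, MulEquiv.coe_toMonoidHom, this,
        Monoid.Coprod.lift_apply_inl]
      exact bA.lift_basis _ i
    · have : φ.symm ((bP j : P) : C) = Monoid.Coprod.inr (bP j) := by
        rw [MulEquiv.symm_apply_eq, hφinr]
      simp only [Sum.elim_inr, MonoidHom.comp_apply, MulEquiv.coe_toMonoidHom, this,
        Monoid.Coprod.lift_apply_inr]
      exact bP.lift_basis _ j
  · intro F hF
    have key : F.comp φ.toMonoidHom =
        Monoid.Coprod.lift (bA.lift (f ∘ Sum.inl)) (bP.lift (f ∘ Sum.inr)) := by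
      apply Monoid.Coprod.hom_ext
      · rw [Monoid.Coprod.lift_comp_inl]
        apply bA.ext_hom
        intro i
        have := hF (Sum.inl i)
        simp only [Sum.elim_inl] at this
        simp only [MonoidHom.comp_apply, MonoidHom.coe_comp, Function.comp_apply,
          MulEquiv.coe_toMonoidHom]
        rw [bA.lift_basis]
        rw [show Monoid.Coprod.inl (bA i) = φ.symm ((bA i : A) : C) by
          rw [MulEquiv.eq_symm_apply]; exact hφinl _, MulEquiv.apply_symm_apply]
        exact this
      · rw [Monoid.Coprod.lift_comp_inr]
        apply bP.ext_hom
        intro j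
        have := hF (Sum.inr j)
        simp only [Sum.elim_inr] at this
        simp only [MonoidHom.comp_apply, MonoidHom.coe_comp, Function.comp_apply,
          MulEquiv.coe_toMonoidHom]
        rw [bP.lift_basis]
        rw [show Monoid.Coprod.inr (bP j) = φ.symm ((bP j : P) : C) by
          rw [MulEquiv.eq_symm_apply]; exact hφinr _, MulEquiv.apply_symm_apply]
        exact this
    ext c
    have h2 := DFunLike.congr_fun key (φ.symm c)
    simpa [MulEquiv.apply_symm_apply] using h2

open scoped Classical
open Function Set Subgroup CategoryTheory CategoryTheory.ActionCategory CategoryTheory.SingleObj Quiver IsFreeGroupoid SemidirectProduct MulAction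



section GroupoidPart

variable {C : Type u} [Group C] {ι : Type u} (b : ι → C)

/-- Variant of `IsFreeGroupoid.actionGroupoidIsFree` for an explicit basis given by a
universal property. -/
noncomputable def freeGroupoidOfBasis
    (hb : ∀ (X : Type u) [Group X] (f : ι → X), ∃! F : C →* X, ∀ i, F (b i) = f i)
    (A : Type u) [MulAction C A] : IsFreeGroupoid (ActionCategory C A) where
  quiverGenerators := ⟨fun a b' => { e : ι // b e • a.back = b'.back }⟩
  of := fun e => ⟨b e.val, e.property⟩
  unique_lift := by
    intro X _ f
    let f' : ι → (A → X) ⋊[mulAutArrow] C := fun e =>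
      ⟨fun a => @f ⟨(), _⟩ ⟨(), a⟩ ⟨e, smul_inv_smul _ a⟩, b e⟩
    rcases hb _ f' with ⟨F', hF', uF'⟩
    refine ⟨ActionCategory.uncurry F' ?_, ?_, ?_⟩
    · suffices SemidirectProduct.rightHom.comp F' = MonoidHom.id _ by
        exact DFunLike.ext_iff.mp this
      obtain ⟨G₀, -, uG⟩ := hb C b
      rw [uG (SemidirectProduct.rightHom.comp F') (fun i => ?_), uG (MonoidHom.id C)
        (fun i => rfl)]
      rw [MonoidHom.comp_apply, hF']
      rfl
    · rintro ⟨⟨⟩, a : A⟩ ⟨⟨⟩, c⟩ ⟨e, h : b e • a = c⟩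
      change (F' (b _)).left _ = _
      rw [hF']
      cases inv_smul_eq_iff.mpr h.symm
      rfl
    · intro E hE
      have : ActionCategory.curry E = F' := by
        apply uF'
        intro e
        ext
        · convert! hE _ _ _
          rfl
        · rfl
      apply Functor.hext
      · intro
        apply Unit.ext
      · refine ActionCategory.cases ?_
        intros
        subst this
        rfl

end GroupoidPart

section SpanningTreePart

variable {G : Type u} [Groupoid.{u, u} G] [IsFreeGroupoid G]
  (T : WideSubquiver (Symmetrify <| Generators G)) [Arborescence T]

/-- The root vertex of the spanning tree, as an object of `G`. -/
noncomputable def rootVertex : G :=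
  show G from Quiver.root T

open IsFreeGroupoid.SpanningTree in
/-- `treeHom` at the root vertex is the identity. -/
theorem treeHom_rootVertex : SpanningTree.treeHom T (rootVertex T) = 𝟙 _ :=
  SpanningTree.treeHom_root T

open IsFreeGroupoid.SpanningTree in
/-- The universal property form of `IsFreeGroupoid.SpanningTree.endIsFree`: the endomorphism
group at the root vertex is free on the loops given by arrows not in the spanning tree. -/
theorem end_unique_lift (X : Type u) [Group X]
    (f : ((wideSubquiverEquivSetTotal <| wideSubquiverSymmetrify T)ᶜ : Set _) → X) :
    ∃! F : End (rootVertex T) →* X,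
      ∀ e, F (loopOfHom T (IsFreeGroupoid.of e.val.hom)) = f e := by
  let f' : Labelling (Generators G) X := fun a b e =>
    if h : e ∈ wideSubquiverSymmetrify T a b then 1 else f ⟨⟨a, b, e⟩, h⟩
  rcases unique_lift f' with ⟨F', hF', uF'⟩
  refine ⟨F'.mapEnd _, ?_, ?_⟩
  · suffices ∀ {x y} (q : x ⟶ y), F'.map (loopOfHom T q) = (F'.map q : X) by
      rintro ⟨⟨a, b, e⟩, h⟩
      erw [Functor.mapEnd_apply, this, hF']
      exact dif_neg h
    intros x y q
    suffices ∀ {a} (p : Path (Quiver.root T) a), F'.map (homOfPath T p) = 1 by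
      simp only [treeHom, comp_as_mul, inv_as_inv, loopOfHom, inv_one, mul_one,
        one_mul, Functor.map_inv, Functor.map_comp]
      exact (congrArg₂ (fun u v : X => u⁻¹ * F'.map q * v) (this (a := show WideSubquiver.toType _ T from y) default)
        (this (a := show WideSubquiver.toType _ T from x) default)).trans
        (by simp : ((1 : X)⁻¹ * F'.map q * 1 : X) = F'.map q)
    intro a p
    induction' p with b c p e ih
    · exact F'.map_id _
    erw [homOfPath.eq_2, F'.map_comp, comp_as_mul, ih, mul_one]
    rcases e with ⟨e | e, eT⟩
    · erw [hF']
      exact dif_pos (Or.inl eT)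
    · erw [F'.map_inv, inv_as_inv, inv_eq_one, hF']
      exact dif_pos (Or.inr eT)
  · intro E hE
    have hfun : functorOfMonoidHom T E = F' := by
      apply uF'
      intro a b e
      change E (loopOfHom T _) = dite _ _ _
      split_ifs with h
      · rw [loopOfHom_eq_id T e h]
        exact E.map_one
      · exact hE ⟨⟨a, b, e⟩, h⟩
    ext x
    have h2 : (functorOfMonoidHom T E).map x = F'.map x := by rw [hfun]
    show E x = F'.map x
    rw [← h2]
    show E x = E (loopOfHom T x)
    congr 1
    show x = SpanningTree.treeHom T (rootVertex T) ≫ x ≫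
      CategoryTheory.inv (SpanningTree.treeHom T (rootVertex T))
    rw [treeHom_rootVertex]
    erw [Category.id_comp, IsIso.inv_id, Category.comp_id]

end SpanningTreePart

open Quiver in
theorem no_arrow_to_root {V : Type*} [Quiver V] [Arborescence V] {a : V}
    (f : a ⟶ Quiver.root V) : False := by
  have h1 : ((default : Path (Quiver.root V) a).cons f)
      = (Path.nil : Path (Quiver.root V) (Quiver.root V)) := Subsingleton.elim _ _
  exact (Nat.succ_ne_zero _) (congrArg Path.length h1)

open Function Subgroup

theorem coprod_lift_bijective_map {H K : Type*} [Group H] [Group K] (e : H ≃* K)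
    {S₁ S₂ : Subgroup H}
    (h : Function.Bijective (Monoid.Coprod.lift S₁.subtype S₂.subtype)) :
    Function.Bijective (Monoid.Coprod.lift (S₁.map (e : H →* K)).subtype
      (S₂.map (e : H →* K)).subtype) := by
  let e₁ := MulEquiv.subgroupMap e S₁
  let e₂ := MulEquiv.subgroupMap e S₂
  let Φ : Monoid.Coprod ↥(S₁.map (e : H →* K)) ↥(S₂.map (e : H →* K)) →* Monoid.Coprod ↥S₁ ↥S₂ :=
    Monoid.Coprod.map e₁.symm.toMonoidHom e₂.symm.toMonoidHom
  let Φ' : Monoid.Coprod ↥S₁ ↥S₂ →* Monoid.Coprod ↥(S₁.map (e : H →* K)) ↥(S₂.map (e : H →* K)) :=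
    Monoid.Coprod.map e₁.toMonoidHom e₂.toMonoidHom
  have hΦ : Function.Bijective Φ := by
    constructor
    · intro x y hxy
      have h1 : Φ'.comp Φ = MonoidHom.id _ := by
        simp only [Φ, Φ']
        rw [Monoid.Coprod.map_comp_map, ← Monoid.Coprod.map_id_id]
        congr 1 <;> ext x <;> simp
      calc x = Φ' (Φ x) := (DFunLike.congr_fun h1 x).symm
        _ = Φ' (Φ y) := by rw [hxy]
        _ = y := DFunLike.congr_fun h1 y
    · intro x
      refine ⟨Φ' x, ?_⟩
      have h1 : Φ.comp Φ' = MonoidHom.id _ := by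
        simp only [Φ, Φ']
        rw [Monoid.Coprod.map_comp_map, ← Monoid.Coprod.map_id_id]
        congr 1 <;> ext x <;> simp
      exact DFunLike.congr_fun h1 x
  have key : Monoid.Coprod.lift (S₁.map (e : H →* K)).subtype (S₂.map (e : H →* K)).subtype =
      (e.toMonoidHom.comp (Monoid.Coprod.lift S₁.subtype S₂.subtype)).comp Φ := by
    apply Monoid.Coprod.hom_ext
    · ext x
      simp only [Monoid.Coprod.lift_comp_inl, MonoidHom.comp_apply, MonoidHom.coe_comp,
        Function.comp_apply]
      rw [show Φ (Monoid.Coprod.inl x) = Monoid.Coprod.inl (e₁.symm x) from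
        DFunLike.congr_fun (Monoid.Coprod.map_comp_inl _ _) x]
      rw [Monoid.Coprod.lift_apply_inl]
      show (x : K) = e ((e₁.symm x : S₁) : H)
      conv_lhs => rw [← e₁.apply_symm_apply x]
      rw [MulEquiv.coe_subgroupMap_apply]
    · ext x
      simp only [Monoid.Coprod.lift_comp_inr, MonoidHom.comp_apply, MonoidHom.coe_comp,
        Function.comp_apply]
      rw [show Φ (Monoid.Coprod.inr x) = Monoid.Coprod.inr (e₂.symm x) from
        DFunLike.congr_fun (Monoid.Coprod.map_comp_inr _ _) x]
      rw [Monoid.Coprod.lift_apply_inr]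
      show (x : K) = e ((e₂.symm x : S₂) : H)
      conv_lhs => rw [← e₂.apply_symm_apply x]
      rw [MulEquiv.coe_subgroupMap_apply]
  rw [key]
  exact (e.bijective.comp h).comp hΦ

section MainProof

universe w

open CategoryTheory CategoryTheory.ActionCategory IsFreeGroupoid Quiver

private theorem main_aux {C : Type w} [Group C] [IsFreeGroup C]
    (A B : Subgroup C) (hAB : A ≤ B)
    (hA : ∃ P : Subgroup C, Function.Bijective (Monoid.Coprod.lift A.subtype P.subtype)) :
    ∃ P : Subgroup ↥B, Function.Bijective
      (Monoid.Coprod.lift (A.subgroupOf B).subtype P.subtype) := by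
  classical
  obtain ⟨P, hbij⟩ := hA
  obtain ⟨ιA, ⟨bA⟩⟩ := IsFreeGroup.nonempty_basis (G := ↥A)
  obtain ⟨ιP, ⟨bP⟩⟩ := IsFreeGroup.nonempty_basis (G := ↥P)
  let bC : ιA ⊕ ιP → C := Sum.elim (fun i => ((bA i : ↥A) : C)) (fun j => ((bP j : ↥P) : C))
  have hb : ∀ (X : Type w) [Group X] (f : ιA ⊕ ιP → X), ∃! F : C →* X, ∀ i, F (bC i) = f i :=
    fun X _ f => adapted_unique_lift hbij bA bP X f
  letI iFG : IsFreeGroupoid (ActionCategory C (C ⧸ B)) := freeGroupoidOfBasis bC hb (C ⧸ B)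
  let r : ActionCategory C (C ⧸ B) := objEquiv C (C ⧸ B) ↑(1 : C)
  letI : RootedConnected (show Symmetrify (Generators (ActionCategory C (C ⧸ B))) from r) :=
    ⟨fun b' => IsFreeGroupoid.path_nonempty_of_hom
      (@CategoryTheory.nonempty_hom_of_preconnected_groupoid _ _
        (inferInstance : IsConnected (ActionCategory C (C ⧸ B))).toIsPreconnected r b')⟩
  let T : WideSubquiver (Symmetrify (Generators (ActionCategory C (C ⧸ B)))) :=
    geodesicSubtree (show Symmetrify (Generators (ActionCategory C (C ⧸ B))) from r)
  letI : Arborescence (WideSubquiver.toType _ T) := geodesicArborescence _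
  have hbE := fun (X : Type w) (_ : Group X) f => end_unique_lift T X f
  let S : Set (Total (Generators (ActionCategory C (C ⧸ B)))) :=
    (wideSubquiverEquivSetTotal (wideSubquiverSymmetrify T))ᶜ
  let ℓ : S → @End _ Groupoid.toCategory.toCategoryStruct (rootVertex T) := fun e => SpanningTree.loopOfHom T (IsFreeGroupoid.of e.val.hom)
  let ψ : @End _ Groupoid.toCategory.toCategoryStruct (rootVertex T) ≃* ↥B :=
    show End (objEquiv C (C ⧸ B) ↑(1 : C)) ≃* ↥B from endMulEquivSubgroup B
  let p : S → Prop := fun x => ∃ iA : ιA, ((ψ (ℓ x) : ↥B) : C) = ((bA iA : ↥A) : C)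
  have bij := split_basis_coprod_lift_bijective ℓ (fun X _ f => hbE X _ f) p
  have bij2 := coprod_lift_bijective_map ψ bij
  refine ⟨(Subgroup.closure (ℓ '' {x | ¬ p x})).map (ψ : @End _ Groupoid.toCategory.toCategoryStruct (rootVertex T) →* ↥B), ?_⟩
  have construct : ∀ iA : ιA, ∃ x₀ : S, p x₀ ∧ ((ψ (ℓ x₀) : ↥B) : C) = ((bA iA : ↥A) : C) := by
    intro iA
    have hAB' : ((bA iA : ↥A) : C) ∈ B := hAB (bA iA).2
    have hmem : bC (Sum.inl iA) • (r.back) = r.back := by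
      show bC (Sum.inl iA) • ((1 : C) : C ⧸ B) = ((1 : C) : C ⧸ B)
      have h0 : bC (Sum.inl iA) • ((1 : C) : C ⧸ B) = ((bC (Sum.inl iA) * 1 : C) : C ⧸ B) := rfl
      rw [h0, mul_one]
      exact (QuotientGroup.eq).mpr (by simpa [bC] using inv_mem hAB')
    let v : Generators (ActionCategory C (C ⧸ B)) := r
    let e₀ : v ⟶ v := ⟨Sum.inl iA, hmem⟩
    have ht : (⟨v, v, e₀⟩ : Total (Generators (ActionCategory C (C ⧸ B)))) ∈ S := by
      intro hmem2
      rcases hmem2 with h | h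
      · exact no_arrow_to_root (V := WideSubquiver.toType _ T)
          (show (show WideSubquiver.toType _ T from v) ⟶
            Quiver.root (WideSubquiver.toType _ T) from ⟨Sum.inl e₀, h⟩)
      · exact no_arrow_to_root (V := WideSubquiver.toType _ T)
          (show (show WideSubquiver.toType _ T from v) ⟶
            Quiver.root (WideSubquiver.toType _ T) from ⟨Sum.inr e₀, h⟩)
    refine ⟨⟨⟨v, v, e₀⟩, ht⟩, ?_⟩
    have hval : ((ψ (ℓ ⟨⟨v, v, e₀⟩, ht⟩) : ↥B) : C) = ((bA iA : ↥A) : C) := by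
      show ((ψ (SpanningTree.loopOfHom T (IsFreeGroupoid.of e₀)) : ↥B) : C) = _
      have hloop : SpanningTree.loopOfHom T (IsFreeGroupoid.of e₀)
          = (show End (rootVertex T) from IsFreeGroupoid.of e₀) := by
        unfold SpanningTree.loopOfHom
        have h : SpanningTree.treeHom T v = 𝟙 _ := treeHom_rootVertex T
        simp only [h, Category.id_comp, IsIso.inv_id, Category.comp_id]
        erw [Category.id_comp, IsIso.inv_id, Category.comp_id]
        rfl
      rw [hloop]
      rfl
    exact ⟨⟨iA, hval⟩, hval⟩
  have hmain : (Subgroup.closure (ℓ '' {x | p x})).map (ψ : @End _ Groupoid.toCategory.toCategoryStruct (rootVertex T) →* ↥B)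
      = A.subgroupOf B := by
    apply Subgroup.map_injective (Subgroup.subtype_injective B)
    rw [Subgroup.subgroupOf_map_subtype, inf_eq_left.mpr hAB]
    rw [MonoidHom.map_closure, MonoidHom.map_closure]
    have hset : ((B.subtype : ↥B →* C) '' ((ψ : @End _ Groupoid.toCategory.toCategoryStruct (rootVertex T) →* ↥B) '' (ℓ '' {x | p x})))
        = (A.subtype : ↥A →* C) '' Set.range bA := by
      ext c
      constructor
      · rintro ⟨y, ⟨z, ⟨x, hx, rfl⟩, rfl⟩, rfl⟩
        obtain ⟨iA, hiA⟩ := hx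
        exact ⟨bA iA, ⟨iA, rfl⟩, hiA.symm⟩
      · rintro ⟨a, ⟨iA, rfl⟩, rfl⟩
        obtain ⟨x₀, _, hval⟩ := construct iA
        exact ⟨ψ (ℓ x₀), ⟨ℓ x₀, ⟨x₀, ‹p x₀›, rfl⟩, rfl⟩, hval⟩
    rw [hset, ← MonoidHom.map_closure, bA.closure_range,
      ← MonoidHom.range_eq_map, Subgroup.range_subtype]
  rw [← hmain]
  exact bij2

end MainProof

/-- A subgroup `A` of a group `G` is a *free factor* of `G` if there is a subgroup `P`
such that the canonical homomorphism `A ∗ P →* G` induced by the inclusions is bijective. -/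
def IsFreeFactor {G : Type*} [Group G] (A : Subgroup G) : Prop :=
  ∃ P : Subgroup G, Function.Bijective (Monoid.Coprod.lift A.subtype P.subtype)

/-- If `A ≤ B ≤ C` are subgroups of a free group `C` and `A` is a free factor of `C`,
then `A` is a free factor of `B`. -/
theorem isFreeFactor_subgroupOf_of_le {C : Type*} [Group C] [IsFreeGroup C]
    (A B : Subgroup C) (hAB : A ≤ B) (hA : IsFreeFactor A) :
    IsFreeFactor (A.subgroupOf B) :=
  main_aux A B hAB hA
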